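/- Fix a real constant α and let G(w, w̄, v) be a smooth real-valued function of a complex variable w and real variable v satisfying equation (alterform) on ℂ × ℝ. Then for all real constants D₁, D₂, the function G̃(w, w̄, v) := G(w, w̄, v) + D₁ e^{v sin α} cos(v cos α) + D₂ e^{v sin α} sin(v cos α) also satisfies equation (alterform) on ℂ × ℝ. -/

import Mathlib

noncomputable section

/-- Wirtinger derivative ∂_w of a complex-valued function of (w, v) ∈ ℂ × ℝ. -/
def dw (G : ℂ → ℝ → ℂ) : ℂ → ℝ → ℂ := fun w v =>
  ((fderiv ℝ (fun z => G z v) w 1) - Complex.I * (fderiv ℝ (fun z => G z v) w Complex.I)) / 2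

/-- Wirtinger derivative ∂_{w̄} of a complex-valued function of (w, v) ∈ ℂ × ℝ. -/
def dwb (G : ℂ → ℝ → ℂ) : ℂ → ℝ → ℂ := fun w v =>
  ((fderiv ℝ (fun z => G z v) w 1) + Complex.I * (fderiv ℝ (fun z => G z v) w Complex.I)) / 2

/-- Partial derivative ∂_v of a complex-valued function of (w, v) ∈ ℂ × ℝ. -/
def dv (G : ℂ → ℝ → ℂ) : ℂ → ℝ → ℂ := fun w v => deriv (fun t => G w t) v

/-- A real-valued function of (w, v), viewed as complex-valued. -/
def cx (G : ℂ → ℝ → ℝ) : ℂ → ℝ → ℂ := fun w v => (G w v : ℂ)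

/-- Equation (alterform) at the point (w, v):
(G + G_{vv} − 2 G_v sin α) G_{ww̄}
  − (e^{iα} G_{w̄} − i G_{vw̄})(e^{−iα} G_w + i G_{vw}) = 4. -/
def Alterform (α : ℝ) (G : ℂ → ℝ → ℝ) (w : ℂ) (v : ℝ) : Prop :=
  (cx G w v + dv (dv (cx G)) w v - 2 * dv (cx G) w v * (Real.sin α : ℂ))
      * dwb (dw (cx G)) w v
    - (Complex.exp (Complex.I * (α : ℂ)) * dwb (cx G) w v
        - Complex.I * dwb (dv (cx G)) w v)
      * (Complex.exp (-(Complex.I * (α : ℂ))) * dw (cx G) w v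
        + Complex.I * dw (dv (cx G)) w v)
    = 4

/-- Derivative of a linear combination of e^{ts}cos(tc) and e^{ts}sin(tc). -/
lemma combo_hasDerivAt (s c A B t : ℝ) :
    HasDerivAt (fun t => A * (Real.exp (t * s) * Real.cos (t * c))
        + B * (Real.exp (t * s) * Real.sin (t * c)))
      ((A * s + B * c) * (Real.exp (t * s) * Real.cos (t * c))
        + (B * s - A * c) * (Real.exp (t * s) * Real.sin (t * c))) t := by
  have he : HasDerivAt (fun x : ℝ => Real.exp (x * s)) (Real.exp (t * s) * (1 * s)) t :=
    ((hasDerivAt_id t).mul_const s).exp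
  have hcos : HasDerivAt (fun x : ℝ => Real.cos (x * c)) (-Real.sin (t * c) * (1 * c)) t :=
    ((hasDerivAt_id t).mul_const c).cos
  have hsin : HasDerivAt (fun x : ℝ => Real.sin (x * c)) (Real.cos (t * c) * (1 * c)) t :=
    ((hasDerivAt_id t).mul_const c).sin
  have h1 := (he.mul hcos).const_mul A
  have h2 := (he.mul hsin).const_mul B
  refine (h1.add h2).congr_deriv ?_
  ring

/-- Adding D₁ e^{v sin α} cos(v cos α) + D₂ e^{v sin α} sin(v cos α)
maps solutions of (alterform) to solutions. -/
theorem alterform_additive_symmetry (α : ℝ) (G : ℂ → ℝ → ℝ)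
    (hG : ContDiff ℝ (⊤ : ℕ∞) (fun p : ℂ × ℝ => G p.1 p.2))
    (hsol : ∀ w : ℂ, ∀ v : ℝ, Alterform α G w v)
    (D₁ D₂ : ℝ) :
    ∀ w : ℂ, ∀ v : ℝ, Alterform α
      (fun z t => G z t + D₁ * Real.exp (t * Real.sin α) * Real.cos (t * Real.cos α)
        + D₂ * Real.exp (t * Real.sin α) * Real.sin (t * Real.cos α)) w v := by
  set s := Real.sin α with hs
  set c := Real.cos α with hc
  set Gt : ℂ → ℝ → ℝ := fun z t => G z t + D₁ * Real.exp (t * s) * Real.cos (t * c)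
        + D₂ * Real.exp (t * s) * Real.sin (t * c) with hGt
  -- the added function and its derivatives (real-valued)
  set h0 : ℝ → ℝ := fun t => D₁ * (Real.exp (t * s) * Real.cos (t * c))
      + D₂ * (Real.exp (t * s) * Real.sin (t * c)) with hh0
  set h1 : ℝ → ℝ := fun t => (D₁ * s + D₂ * c) * (Real.exp (t * s) * Real.cos (t * c))
      + (D₂ * s - D₁ * c) * (Real.exp (t * s) * Real.sin (t * c)) with hh1
  set h2 : ℝ → ℝ := fun t =>
      ((D₁ * s + D₂ * c) * s + (D₂ * s - D₁ * c) * c) * (Real.exp (t * s) * Real.cos (t * c))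
      + ((D₂ * s - D₁ * c) * s - (D₁ * s + D₂ * c) * c) * (Real.exp (t * s) * Real.sin (t * c))
      with hh2
  have hd0 : ∀ t, HasDerivAt (fun t => (h0 t : ℂ)) ((h1 t : ℝ) : ℂ) t := fun t =>
    (combo_hasDerivAt s c D₁ D₂ t).ofReal_comp
  have hd1 : ∀ t, HasDerivAt (fun t => (h1 t : ℂ)) ((h2 t : ℝ) : ℂ) t := fun t =>
    (combo_hasDerivAt s c (D₁ * s + D₂ * c) (D₂ * s - D₁ * c) t).ofReal_comp
  have pyth : s ^ 2 + c ^ 2 = 1 := by rw [hs, hc]; exact Real.sin_sq_add_cos_sq α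
  have key : ∀ t : ℝ, ((h0 t : ℝ) : ℂ) + ((h2 t : ℝ) : ℂ) - 2 * ((h1 t : ℝ) : ℂ) * (s : ℂ) = 0 := by
    intro t
    have h' : h0 t + h2 t - 2 * h1 t * s = 0 := by
      simp only [hh0, hh1, hh2]
      linear_combination (-(D₁ * (Real.exp (t * s) * Real.cos (t * c))
        + D₂ * (Real.exp (t * s) * Real.sin (t * c)))) * pyth
    have h'' : ((h0 t + h2 t - 2 * h1 t * s : ℝ) : ℂ) = 0 := by rw [h']; norm_num
    push_cast at h''
    linear_combination h''
  -- smoothness facts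
  have hGc : ContDiff ℝ (⊤ : ℕ∞) (fun p : ℂ × ℝ => cx G p.1 p.2) :=
    Complex.ofRealCLM.contDiff.comp hG
  have hslice : ∀ z : ℂ, ContDiff ℝ (⊤ : ℕ∞) (fun t => cx G z t) := fun z =>
    hGc.comp (contDiff_const.prodMk contDiff_id)
  have hdiffv : ∀ z : ℂ, Differentiable ℝ (fun t => cx G z t) := fun z =>
    (hslice z).differentiable (by simp)
  have hdiffv2 : ∀ z : ℂ, Differentiable ℝ (deriv (fun t => cx G z t)) := fun z =>
    ((contDiff_infty_iff_deriv.mp (hslice z)).2).differentiable (by simp)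
  -- cx Gt = cx G + h0
  have hcx : ∀ z t, cx Gt z t = cx G z t + ((h0 t : ℝ) : ℂ) := by
    intro z t
    simp only [cx, hGt, hh0]
    push_cast
    ring
  -- dv (cx Gt) = dv (cx G) + h1
  have hdv : ∀ z t, dv (cx Gt) z t = dv (cx G) z t + ((h1 t : ℝ) : ℂ) := by
    intro z t
    have hfe : (fun t => cx Gt z t) = fun t => cx G z t + ((h0 t : ℝ) : ℂ) := funext (hcx z)
    simp only [dv, hfe]
    rw [deriv_fun_add (hdiffv z t) (hd0 t).differentiableAt, (hd0 t).deriv]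
  -- dv (dv (cx Gt)) = dv (dv (cx G)) + h2
  have hdvdv : ∀ z t, dv (dv (cx Gt)) z t = dv (dv (cx G)) z t + ((h2 t : ℝ) : ℂ) := by
    intro z t
    have hfe : (fun t => dv (cx Gt) z t) = fun t => dv (cx G) z t + ((h1 t : ℝ) : ℂ) :=
      funext (hdv z)
    have hda : DifferentiableAt ℝ (fun t => dv (cx G) z t) t := hdiffv2 z t
    show deriv (fun t => dv (cx Gt) z t) t = deriv (fun t => dv (cx G) z t) t + _
    rw [hfe, deriv_fun_add hda (hd1 t).differentiableAt, (hd1 t).deriv]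
  -- w-derivatives are unchanged
  have hfw : ∀ (v : ℝ), (fderiv ℝ (fun z => cx Gt z v)) = fderiv ℝ (fun z => cx G z v) := by
    intro v
    have : (fun z => cx Gt z v) = fun z => cx G z v + ((h0 v : ℝ) : ℂ) := funext fun z => hcx z v
    funext z
    rw [this, fderiv_add_const]
  have hdw : dw (cx Gt) = dw (cx G) := by
    funext z t; simp only [dw, hfw t]
  have hdwb : dwb (cx Gt) = dwb (cx G) := by
    funext z t; simp only [dwb, hfw t]
  have hfwv : ∀ (v : ℝ), (fderiv ℝ (fun z => dv (cx Gt) z v)) =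
      fderiv ℝ (fun z => dv (cx G) z v) := by
    intro v
    have : (fun z => dv (cx Gt) z v) = fun z => dv (cx G) z v + ((h1 v : ℝ) : ℂ) :=
      funext fun z => hdv z v
    funext z
    rw [this, fderiv_add_const]
  have hdwdv : dw (dv (cx Gt)) = dw (dv (cx G)) := by
    funext z t; simp only [dw, hfwv t]
  have hdwbdv : dwb (dv (cx Gt)) = dwb (dv (cx G)) := by
    funext z t; simp only [dwb, hfwv t]
  intro w v
  have horig := hsol w v
  unfold Alterform at horig ⊢
  rw [hdw, hdwb, hdwdv, hdwbdv, hcx w v, hdv w v, hdvdv w v]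
  linear_combination horig + (key v) * (dwb (dw (cx G)) w v)
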